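/- There exists a constant c > 0 such that for all nonzero ξ, η ∈ ℝ³ with ξ ≠ η and |ξ|/3 < |η| < 3|ξ|, one has |Φ₁(ξ,η)| ≥ c·|ξ−η|·( γ² + β² + d₁² ), where γ ∈ [0,π] is the angle between ξ and ξ−η, θ ∈ [0,π] is the angle between ξ and η, β = γ + θ, and d₁² = (|ξ|² + |η|²) / ((1 + |ξ|² + |η|²)(1 + |ξ−η|²)). -/

import Mathlib

noncomputable def q (r : ℝ) : ℝ := Real.sqrt ((2 + r ^ 2) / (1 + r ^ 2))
noncomputable def p (r : ℝ) : ℝ := r * q r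
noncomputable def Φ₁ (ξ η : EuclideanSpace ℝ (Fin 3)) : ℝ :=
  p ‖ξ‖ - p ‖ξ - η‖ - p ‖η‖

open Real

lemma q_sq (r : ℝ) : q r ^ 2 = (2 + r ^ 2) / (1 + r ^ 2) := by
  have h : (0:ℝ) ≤ (2 + r ^ 2) / (1 + r ^ 2) := by positivity
  simpa [q] using Real.sq_sqrt h

lemma one_le_q (r : ℝ) : 1 ≤ q r := by
  have h1 : (0:ℝ) < 1 + r ^ 2 := by positivity
  have : (1:ℝ) ≤ (2 + r ^ 2) / (1 + r ^ 2) := by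
    rw [le_div_iff₀ h1]; linarith
  calc (1:ℝ) = Real.sqrt 1 := by simp
  _ ≤ q r := Real.sqrt_le_sqrt this

lemma q_le (r : ℝ) : q r ^ 2 ≤ 2 := by
  rw [q_sq]
  have h1 : (0:ℝ) < 1 + r ^ 2 := by positivity
  rw [div_le_iff₀ h1]; nlinarith [sq_nonneg r]

lemma q_pos (r : ℝ) : 0 < q r := lt_of_lt_of_le one_pos (one_le_q r)

-- q is decreasing, quantitatively
lemma q_diff {x y : ℝ} (hx : 0 ≤ x) (hxy : x ≤ y) :
    (y ^ 2 - x ^ 2) / (3 * ((1 + x ^ 2) * (1 + y ^ 2))) ≤ q x - q y := by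
  have hx1 : (0:ℝ) < 1 + x ^ 2 := by positivity
  have hy1 : (0:ℝ) < 1 + y ^ 2 := by positivity
  have hsq : q x ^ 2 - q y ^ 2 = (y ^ 2 - x ^ 2) / ((1 + x ^ 2) * (1 + y ^ 2)) := by
    rw [q_sq, q_sq]; field_simp; ring
  have hqx := q_pos x
  have hqy := q_pos y
  have hfr : (0:ℝ) ≤ (y ^ 2 - x ^ 2) / ((1 + x ^ 2) * (1 + y ^ 2)) := by
    apply div_nonneg (by nlinarith) (by positivity)
  have hle : 0 ≤ q x - q y := by nlinarith
  have hsum : q x + q y ≤ 3 := by nlinarith [q_le x, q_le y, sq_nonneg (q x - q y), sq_nonneg (q x + q y)]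
  have key : (q x - q y) * (q x + q y) = (y ^ 2 - x ^ 2) / ((1 + x ^ 2) * (1 + y ^ 2)) := by
    rw [← hsq]; ring
  have h3 : (y ^ 2 - x ^ 2) / ((1 + x ^ 2) * (1 + y ^ 2)) ≤ (q x - q y) * 3 := by
    rw [← key]
    exact mul_le_mul_of_nonneg_left hsum hle
  rw [div_le_iff₀ (by positivity)]
  calc (y ^ 2 - x ^ 2) = ((y ^ 2 - x ^ 2) / ((1 + x ^ 2) * (1 + y ^ 2))) * ((1 + x ^ 2) * (1 + y ^ 2)) := by
        field_simp
  _ ≤ (q x - q y) * 3 * ((1 + x ^ 2) * (1 + y ^ 2)) := by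
        apply mul_le_mul_of_nonneg_right h3 (by positivity)
  _ = (q x - q y) * (3 * ((1 + x ^ 2) * (1 + y ^ 2))) := by ring

lemma le_p {r : ℝ} (hr : 0 ≤ r) : r ≤ p r := by
  have := one_le_q r
  calc r = r * 1 := by ring
  _ ≤ r * q r := by nlinarith

lemma p_sq (r : ℝ) : p r ^ 2 = r ^ 2 * ((2 + r ^ 2) / (1 + r ^ 2)) := by
  rw [p, mul_pow, q_sq]

lemma p_nonneg {r : ℝ} (hr : 0 ≤ r) : 0 ≤ p r := le_trans hr (le_p hr)

lemma p_diff {x y : ℝ} (hx : 0 ≤ x) (hxy : x ≤ y) : (y - x) / 2 ≤ p y - p x := by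
  rcases eq_or_lt_of_le hxy with rfl | hlt
  · simp
  have hy : 0 < y := lt_of_le_of_lt hx hlt
  have hx1 : (0:ℝ) < 1 + x ^ 2 := by positivity
  have hy1 : (0:ℝ) < 1 + y ^ 2 := by positivity
  have hsq : y ^ 2 - x ^ 2 ≤ p y ^ 2 - p x ^ 2 := by
    rw [p_sq, p_sq]
    have key : y ^ 2 * ((2 + y ^ 2) / (1 + y ^ 2)) - x ^ 2 * ((2 + x ^ 2) / (1 + x ^ 2))
        - (y ^ 2 - x ^ 2) = (y^2 - x^2) / ((1+x^2)*(1+y^2)) := by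
      field_simp; ring
    have h0 : (0:ℝ) ≤ (y^2 - x^2) / ((1+x^2)*(1+y^2)) := by
      apply div_nonneg (by nlinarith) (by positivity)
    linarith
  have hpxy : p x ≤ p y := by nlinarith [p_nonneg hx, p_nonneg hy.le]
  have hpup : p x + p y ≤ 2 * (x + y) := by
    have h2 : q x ≤ 2 := by nlinarith [q_le x, q_pos x]
    have h2' : q y ≤ 2 := by nlinarith [q_le y, q_pos y]
    have := mul_le_mul_of_nonneg_left h2 hx
    have := mul_le_mul_of_nonneg_left h2' hy.le
    simp only [p]; linarith
  have h1 : (y - x) * (y + x) ≤ (p y - p x) * (2 * (x + y)) := by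
    calc (y - x) * (y + x) = y^2 - x^2 := by ring
    _ ≤ p y ^2 - p x ^2 := hsq
    _ = (p y - p x) * (p y + p x) := by ring
    _ ≤ (p y - p x) * (2 * (x + y)) := by
        apply mul_le_mul_of_nonneg_left (by linarith) (by linarith)
  have hxy0 : 0 < x + y := by linarith
  rw [div_le_iff₀ (by norm_num : (0:ℝ) < 2)]
  nlinarith [h1]

lemma p_mono {x y : ℝ} (hx : 0 ≤ x) (hxy : x ≤ y) : p x ≤ p y := by
  have := p_diff hx hxy; linarith

-- the A bound
lemma A_bound {s b : ℝ} (hs : 0 < s) (hb : 0 < b) :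
    s * b ^ 2 / (12 * ((1 + s ^ 2) * (1 + b ^ 2))) ≤ p s + p b - p (s + b) := by
  have key : p s + p b - p (s+b) = s * (q s - q (s+b)) + b * (q b - q (s+b)) := by
    simp only [p]; ring
  rcases le_total s b with hsb | hsb
  · -- use s * (q s - q (s+b))
    have h1 := q_diff hs.le (by linarith : s ≤ s + b)
    have h2 : 0 ≤ q b - q (s+b) := by
      have := q_diff hb.le (by linarith : b ≤ s + b)
      have h0 : (0:ℝ) ≤ ((s+b) ^ 2 - b ^ 2) / (3 * ((1 + b ^ 2) * (1 + (s+b) ^ 2))) := by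
        apply div_nonneg (by nlinarith) (by positivity)
      linarith
    have hterm : s * b ^ 2 / (12 * ((1 + s ^ 2) * (1 + b ^ 2))) ≤
        s * (((s+b) ^ 2 - s ^ 2) / (3 * ((1 + s ^ 2) * (1 + (s+b) ^ 2)))) := by
      rw [mul_div_assoc']
      rw [div_le_div_iff₀ (by positivity) (by positivity)]
      have hN : b^2 ≤ (s+b)^2 - s^2 := by nlinarith
      have h4 : 1 + (s+b)^2 ≤ 4*(1+b^2) := by nlinarith
      nlinarith [mul_le_mul_of_nonneg_left h4 (by positivity : (0:ℝ) ≤ s*b^2*3*(1+s^2)),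
        mul_le_mul_of_nonneg_left hN (by positivity : (0:ℝ) ≤ s*12*(1+s^2)*(1+b^2))]
    calc s * b ^ 2 / (12 * ((1 + s ^ 2) * (1 + b ^ 2))) ≤
        s * (((s+b) ^ 2 - s ^ 2) / (3 * ((1 + s ^ 2) * (1 + (s+b) ^ 2)))) := hterm
    _ ≤ s * (q s - q (s+b)) := mul_le_mul_of_nonneg_left h1 hs.le
    _ ≤ s * (q s - q (s+b)) + b * (q b - q (s+b)) := by nlinarith
    _ = p s + p b - p (s+b) := key.symm
  · -- b ≤ s: use b * (q b - q (s+b))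
    have h1 := q_diff hb.le (by linarith : b ≤ s + b)
    have h2 : 0 ≤ q s - q (s+b) := by
      have := q_diff hs.le (by linarith : s ≤ s + b)
      have h0 : (0:ℝ) ≤ ((s+b) ^ 2 - s ^ 2) / (3 * ((1 + s ^ 2) * (1 + (s+b) ^ 2))) := by
        apply div_nonneg (by nlinarith) (by positivity)
      linarith
    have hterm : s * b ^ 2 / (12 * ((1 + s ^ 2) * (1 + b ^ 2))) ≤
        b * (((s+b) ^ 2 - b ^ 2) / (3 * ((1 + b ^ 2) * (1 + (s+b) ^ 2)))) := by
      rw [mul_div_assoc']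
      rw [div_le_div_iff₀ (by positivity) (by positivity)]
      have hN : s^2 ≤ (s+b)^2 - b^2 := by nlinarith
      have h4 : 1 + (s+b)^2 ≤ 4*(1+s^2) := by nlinarith
      have hbs : s*b^2 ≤ b*s^2 := by nlinarith
      nlinarith [mul_le_mul_of_nonneg_left h4 (by positivity : (0:ℝ) ≤ s*b^2*3*(1+b^2)),
        mul_le_mul_of_nonneg_left hN (by positivity : (0:ℝ) ≤ b*12*(1+s^2)*(1+b^2)),
        mul_le_mul_of_nonneg_left hbs (by positivity : (0:ℝ) ≤ 12*(1+s^2)*(1+b^2))]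
    calc s * b ^ 2 / (12 * ((1 + s ^ 2) * (1 + b ^ 2))) ≤
        b * (((s+b) ^ 2 - b ^ 2) / (3 * ((1 + b ^ 2) * (1 + (s+b) ^ 2)))) := hterm
    _ ≤ b * (q b - q (s+b)) := mul_le_mul_of_nonneg_left h1 hb.le
    _ ≤ s * (q s - q (s+b)) + b * (q b - q (s+b)) := by nlinarith
    _ = p s + p b - p (s+b) := key.symm

lemma assemble {a b s γ θ : ℝ} (ha : 0 < a) (hb : 0 < b) (hs : 0 < s)
    (hγ0 : 0 ≤ γ) (hθ0 : 0 ≤ θ) (hβπ : γ + θ ≤ π)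
    (hlaw : a ^ 2 = s ^ 2 + b ^ 2 + 2 * (s * b) * Real.cos (γ + θ))
    (htri1 : a ≤ s + b) (htri2 : s ≤ a + b) (h13 : a / 3 < b) :
    1 / 120 * (s * (γ ^ 2 + (γ + θ) ^ 2 +
      (a ^ 2 + b ^ 2) / ((1 + a ^ 2 + b ^ 2) * (1 + s ^ 2)))) ≤ p s + p b - p a := by
  obtain ⟨β, hβ_def⟩ : ∃ x : ℝ, x = γ + θ := ⟨_, rfl⟩
  rw [← hβ_def] at hβπ hlaw ⊢
  have hβ0 : 0 ≤ β := by rw [hβ_def]; positivity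
  have hcosb : Real.cos β ≤ 1 - β ^ 2 / 5 := by
    have h1 : Real.cos β ≤ 1 - 2 / π ^ 2 * β ^ 2 :=
      Real.cos_le_one_sub_mul_cos_sq (by rw [abs_of_nonneg hβ0]; exact hβπ)
    have hπ : π ^ 2 ≤ 10 := by nlinarith [Real.pi_lt_d2, Real.pi_pos]
    have : β ^ 2 / 5 ≤ 2 / π ^ 2 * β ^ 2 := by
      have hπ0 : (0:ℝ) < π ^ 2 := by positivity
      rw [div_le_iff₀ (by norm_num : (0:ℝ) < 5), div_mul_eq_mul_div, div_mul_eq_mul_div,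
        le_div_iff₀ hπ0]
      nlinarith [sq_nonneg β]
    linarith
  have hab : a < 3 * b := by linarith
  have hgap : s * β ^ 2 / 20 ≤ s + b - a := by
    have h8 : s + b + a ≤ 8 * b := by linarith
    have hba : 0 ≤ s + b - a := by linarith
    have hkey : (2 * s * (β ^ 2 / 5)) * b ≤ ((s + b - a) * 8) * b := by
      nlinarith [mul_le_mul_of_nonneg_left hcosb (by positivity : (0:ℝ) ≤ 2 * (s * b)),
        mul_le_mul_of_nonneg_left h8 hba]
    have h10 := le_of_mul_le_mul_right hkey hb
    rw [div_le_iff₀ (by norm_num : (0:ℝ) < 20)]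
    linarith
  have hB : s * (γ ^ 2 + β ^ 2) / 80 ≤ p (s + b) - p a := by
    have h1 := p_diff ha.le htri1
    have hγβ : γ ^ 2 ≤ β ^ 2 := by nlinarith
    have : s * (γ ^ 2 + β ^ 2) / 80 ≤ s * β ^ 2 / 40 := by
      rw [div_le_div_iff₀ (by norm_num) (by norm_num)]
      nlinarith [hs.le]
    linarith
  have hA := A_bound hs hb
  have hD : (a ^ 2 + b ^ 2) / ((1 + a ^ 2 + b ^ 2) * (1 + s ^ 2))
      ≤ 10 * b ^ 2 / ((1 + b ^ 2) * (1 + s ^ 2)) := by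
    apply div_le_div₀ (by positivity) (by nlinarith) (by positivity) (by nlinarith)
  have hAD : s * ((a ^ 2 + b ^ 2) / ((1 + a ^ 2 + b ^ 2) * (1 + s ^ 2))) / 120
      ≤ p s + p b - p (s + b) := by
    have h1 : s * ((a ^ 2 + b ^ 2) / ((1 + a ^ 2 + b ^ 2) * (1 + s ^ 2))) / 120
        ≤ s * (10 * b ^ 2 / ((1 + b ^ 2) * (1 + s ^ 2))) / 120 := by
      have := mul_le_mul_of_nonneg_left hD hs.le
      linarith
    have h2 : s * (10 * b ^ 2 / ((1 + b ^ 2) * (1 + s ^ 2))) / 120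
        = s * b ^ 2 / (12 * ((1 + s ^ 2) * (1 + b ^ 2))) := by
      field_simp; ring
    linarith
  have hBb : s * (γ ^ 2 + β ^ 2) / 120 ≤ p (s + b) - p a := by
    have : s * (γ ^ 2 + β ^ 2) / 120 ≤ s * (γ ^ 2 + β ^ 2) / 80 := by
      apply div_le_div_of_nonneg_left (by positivity) (by norm_num) (by norm_num)
    linarith
  calc 1 / 120 * (s * (γ ^ 2 + β ^ 2 + (a ^ 2 + b ^ 2) / ((1 + a ^ 2 + b ^ 2) * (1 + s ^ 2))))
      = s * (γ ^ 2 + β ^ 2) / 120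
        + s * ((a ^ 2 + b ^ 2) / ((1 + a ^ 2 + b ^ 2) * (1 + s ^ 2))) / 120 := by ring
  _ ≤ (p (s + b) - p a) + (p s + p b - p (s + b)) := add_le_add hBb hAD
  _ = p s + p b - p a := by ring

theorem stmt13 :
    ∃ c : ℝ, 0 < c ∧
      ∀ ξ η : EuclideanSpace ℝ (Fin 3), ξ ≠ 0 → η ≠ 0 → ξ ≠ η →
        ‖ξ‖ / 3 < ‖η‖ → ‖η‖ < 3 * ‖ξ‖ →
        c * (‖ξ - η‖ * (InnerProductGeometry.angle ξ (ξ - η) ^ 2 +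
            (InnerProductGeometry.angle ξ (ξ - η) + InnerProductGeometry.angle ξ η) ^ 2 +
            (‖ξ‖ ^ 2 + ‖η‖ ^ 2) / ((1 + ‖ξ‖ ^ 2 + ‖η‖ ^ 2) * (1 + ‖ξ - η‖ ^ 2)))) ≤
          |Φ₁ ξ η| := by
  refine ⟨1/120, by norm_num, ?_⟩
  intro ξ η hξ hη hne h13 h31
  have ha : 0 < ‖ξ‖ := norm_pos_iff.mpr hξ
  have hb : 0 < ‖η‖ := norm_pos_iff.mpr hη
  have hs : 0 < ‖ξ - η‖ := by rw [norm_pos_iff]; exact sub_ne_zero.mpr hne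
  have hsum : InnerProductGeometry.angle ξ η + InnerProductGeometry.angle ξ (ξ - η)
      + InnerProductGeometry.angle η (η - ξ) = π :=
    InnerProductGeometry.angle_add_angle_sub_add_angle_sub_eq_pi ξ hη
  have hδ1 : 0 ≤ InnerProductGeometry.angle η (η - ξ) := InnerProductGeometry.angle_nonneg _ _
  have hδ2 : InnerProductGeometry.angle η (η - ξ) ≤ π := InnerProductGeometry.angle_le_pi _ _
  have hγ0 : 0 ≤ InnerProductGeometry.angle ξ (ξ - η) := InnerProductGeometry.angle_nonneg _ _
  have hθ0 : 0 ≤ InnerProductGeometry.angle ξ η := InnerProductGeometry.angle_nonneg _ _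
  have hβπ : InnerProductGeometry.angle ξ (ξ - η) + InnerProductGeometry.angle ξ η ≤ π := by
    linarith
  have hnormrev : ‖η - ξ‖ = ‖ξ - η‖ := norm_sub_rev _ _
  have hinner : Real.cos (InnerProductGeometry.angle η (η - ξ)) * (‖η‖ * ‖η - ξ‖)
      = inner ℝ η (η - ξ) :=
    InnerProductGeometry.cos_angle_mul_norm_mul_norm η (η - ξ)
  have hcosδβ : Real.cos (InnerProductGeometry.angle ξ (ξ - η) + InnerProductGeometry.angle ξ η)
      = - Real.cos (InnerProductGeometry.angle η (η - ξ)) := by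
    have : InnerProductGeometry.angle ξ (ξ - η) + InnerProductGeometry.angle ξ η
        = π - InnerProductGeometry.angle η (η - ξ) := by linarith
    rw [this, Real.cos_pi_sub]
  have hin : inner ℝ (ξ - η) η = - inner ℝ η (η - ξ) := by
    simp [inner_sub_left, inner_sub_right, real_inner_comm ξ η]
  have hlaw : ‖ξ‖ ^ 2 = ‖ξ - η‖ ^ 2 + ‖η‖ ^ 2 + 2 * (‖ξ - η‖ * ‖η‖) *
      Real.cos (InnerProductGeometry.angle ξ (ξ - η) + InnerProductGeometry.angle ξ η) := by
    have hexp := norm_add_sq_real (ξ - η) η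
    rw [show (ξ - η) + η = ξ by abel] at hexp
    rw [hexp, hin, ← hinner, hcosδβ, hnormrev]
    ring
  have htri1 : ‖ξ‖ ≤ ‖ξ - η‖ + ‖η‖ := by
    calc ‖ξ‖ = ‖(ξ - η) + η‖ := by rw [show (ξ - η) + η = ξ by abel]
    _ ≤ ‖ξ - η‖ + ‖η‖ := norm_add_le _ _
  have htri2 : ‖ξ - η‖ ≤ ‖ξ‖ + ‖η‖ := norm_sub_le _ _
  have key := assemble ha hb hs hγ0 hθ0 hβπ hlaw htri1 htri2 h13
  have hphi : |Φ₁ ξ η| = p ‖ξ - η‖ + p ‖η‖ - p ‖ξ‖ := by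
    have h1 : p ‖ξ‖ ≤ p (‖ξ - η‖ + ‖η‖) := p_mono ha.le htri1
    have h2 : (0:ℝ) ≤ ‖ξ - η‖ * ‖η‖ ^ 2 / (12 * ((1 + ‖ξ - η‖ ^ 2) * (1 + ‖η‖ ^ 2))) := by
      positivity
    have h3 := A_bound hs hb
    have hneg : Φ₁ ξ η ≤ 0 := by
      show p ‖ξ‖ - p ‖ξ - η‖ - p ‖η‖ ≤ 0
      linarith
    rw [abs_of_nonpos hneg]
    show -(p ‖ξ‖ - p ‖ξ - η‖ - p ‖η‖) = _
    ring
  rw [hphi]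
  exact key
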